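/- Let D be a Krull-Schmidt triangulated category and U a contravariantly finite thick subcategory of D. Then (U, U^⊥) is a stable t-structure in D, where U^⊥ = {T ∈ D | Hom_D(U, T) = 0 for all U ∈ U}. -/

import Mathlib

open CategoryTheory Limits Pretriangulated

universe v u

namespace PaperIKM

variable (C : Type u) [Category.{v} C] [HasZeroObject C] [HasShift C ℤ] [Preadditive C]
  [∀ n : ℤ, (shiftFunctor C n).Additive] [Pretriangulated C]

/-- A stable t-structure in a pretriangulated category. -/
structure IsStableTStructure (U V : Set C) : Prop where
  shift_memU : ∀ (n : ℤ) (X : C), X ∈ U → (shiftFunctor C n).obj X ∈ U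
  shift_memV : ∀ (n : ℤ) (X : C), X ∈ V → (shiftFunctor C n).obj X ∈ V
  hom_zero : ∀ ⦃X Y : C⦄, X ∈ U → Y ∈ V → ∀ f : X ⟶ Y, f = 0
  exists_triangle : ∀ X : C, ∃ (A B : C) (_ : A ∈ U) (_ : B ∈ V)
    (f : A ⟶ X) (g : X ⟶ B) (h : B ⟶ A⟦(1 : ℤ)⟧),
      Triangle.mk f g h ∈ distTriang C

/-- A full triangulated subcategory (as a set of objects closed under the relevant
operations) which is moreover thick, i.e. closed under direct summands. -/
structure IsThickSub (U : Set C) : Prop where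
  zero_mem : ∀ X : C, IsZero X → X ∈ U
  iso_mem : ∀ ⦃X Y : C⦄, (X ≅ Y) → X ∈ U → Y ∈ U
  shift_mem : ∀ (n : ℤ) (X : C), X ∈ U → (shiftFunctor C n).obj X ∈ U
  ext_mem : ∀ T : Triangle C, (T ∈ distTriang C) → T.obj₁ ∈ U → T.obj₃ ∈ U → T.obj₂ ∈ U
  summand_mem : ∀ (X Y : C) (s : X ⟶ Y) (r : Y ⟶ X), s ≫ r = 𝟙 X → Y ∈ U → X ∈ U

/-- The category is Krull-Schmidt : every object is a finite direct sum of objects with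
local endomorphism rings. -/
def IsKrullSchmidt [HasFiniteBiproducts C] : Prop :=
  ∀ X : C, ∃ (m : ℕ) (Y : Fin m → C),
    (∀ i, IsLocalRing (End (Y i))) ∧ Nonempty (X ≅ ⨁ Y)

variable {C}

/-- `f : A ⟶ X` is a right `U`-approximation of `X`. -/
def IsRightApproximation (U : Set C) {A X : C} (f : A ⟶ X) : Prop :=
  A ∈ U ∧ ∀ B ∈ U, ∀ g : B ⟶ X, ∃ h : B ⟶ A, h ≫ f = g

/-- `U` is a contravariantly finite subcategory. -/
def ContravariantlyFinite (U : Set C) : Prop :=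
  ∀ X : C, ∃ (A : C) (f : A ⟶ X), IsRightApproximation U f

/-- The right perpendicular subcategory `U^⊥`. -/
def rightPerp (U : Set C) : Set C :=
  {T | ∀ X ∈ U, ∀ f : X ⟶ T, f = 0}



/-- The categorical Jacobson radical condition on a morphism. -/
def IsRad {Z W : C} (α : Z ⟶ W) : Prop := ∀ g : W ⟶ Z, IsIso (𝟙 Z - α ≫ g)

lemma locRing_dichotomy {R : Type*} [Ring R] [IsLocalRing R] (a : R) :
    IsUnit a ∨ IsUnit (1 - a) :=
  IsLocalRing.isUnit_or_isUnit_of_add_one (by abel)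

lemma isIso_one_sub_swap {P Q : C} (c : P ⟶ Q) (d : Q ⟶ P)
    (h : IsIso (𝟙 Q - d ≫ c)) : IsIso (𝟙 P - c ≫ d) := by
  set k := inv (𝟙 Q - d ≫ c) with hk
  have h1 : (𝟙 Q - d ≫ c) ≫ k = 𝟙 Q := IsIso.hom_inv_id _
  have h2 : k ≫ (𝟙 Q - d ≫ c) = 𝟙 Q := IsIso.inv_hom_id _
  refine ⟨⟨𝟙 P + c ≫ k ≫ d, ?_, ?_⟩⟩
  · have key : c ≫ k ≫ d - c ≫ d ≫ c ≫ k ≫ d = c ≫ d := by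
      have h1' : c ≫ ((𝟙 Q - d ≫ c) ≫ k) ≫ d = c ≫ d := by rw [h1]; simp
      simpa only [Preadditive.sub_comp, Preadditive.comp_sub, Category.assoc, Category.id_comp, Category.comp_id] using h1'
    have ex : (𝟙 P - c ≫ d) ≫ (𝟙 P + c ≫ k ≫ d) =
        𝟙 P + ((c ≫ k ≫ d - c ≫ d ≫ c ≫ k ≫ d) - c ≫ d) := by
      simp only [Preadditive.sub_comp, Preadditive.comp_add, Preadditive.add_comp,
        Category.id_comp, Category.comp_id, Category.assoc]
      abel
    rw [ex, key, sub_self, add_zero]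
  · have key : c ≫ k ≫ d - c ≫ k ≫ d ≫ c ≫ d = c ≫ d := by
      have h2' : c ≫ (k ≫ (𝟙 Q - d ≫ c)) ≫ d = c ≫ d := by rw [h2]; simp
      simpa only [Preadditive.sub_comp, Preadditive.comp_sub, Category.assoc, Category.id_comp, Category.comp_id] using h2'
    have ex : (𝟙 P + c ≫ k ≫ d) ≫ (𝟙 P - c ≫ d) =
        𝟙 P + ((c ≫ k ≫ d - c ≫ k ≫ d ≫ c ≫ d) - c ≫ d) := by
      simp only [Preadditive.sub_comp, Preadditive.comp_sub, Preadditive.comp_add,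
        Preadditive.add_comp, Category.id_comp, Category.comp_id, Category.assoc]
      abel
    rw [ex, key, sub_self, add_zero]

lemma IsRad.comp_right {Z W V : C} {α : Z ⟶ W} (h : IsRad α) (c : W ⟶ V) :
    IsRad (α ≫ c) := fun g => by
  have := h (c ≫ g)
  simpa [Category.assoc] using this

lemma IsRad.comp_left {Z W V : C} {α : Z ⟶ W} (h : IsRad α) (c : V ⟶ Z) :
    IsRad (c ≫ α) := fun g => by
  have h0 : IsIso (𝟙 Z - (α ≫ g) ≫ c) := by simpa [Category.assoc] using h (g ≫ c)
  have := isIso_one_sub_swap c (α ≫ g) h0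
  simpa [Category.assoc] using this

lemma IsRad.zero {Z W : C} : IsRad (0 : Z ⟶ W) := fun g => by
  simpa using (inferInstance : IsIso (𝟙 Z))

lemma IsRad.add {Z W : C} {α β : Z ⟶ W} (hα : IsRad α) (hβ : IsRad β) :
    IsRad (α + β) := by
  intro g
  have h1 : IsIso (𝟙 Z - α ≫ g) := hα g
  have h2 : IsIso (𝟙 Z - β ≫ (g ≫ inv (𝟙 Z - α ≫ g))) := hβ _
  have heq : 𝟙 Z - (α + β) ≫ g =
      (𝟙 Z - β ≫ (g ≫ inv (𝟙 Z - α ≫ g))) ≫ (𝟙 Z - α ≫ g) := by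
    simp only [Preadditive.sub_comp, Preadditive.add_comp, Category.id_comp,
      Category.assoc, IsIso.inv_hom_id, Category.comp_id]
    abel
  rw [heq]
  infer_instance

lemma IsRad.sum {Z W : C} {ι : Type*} (s : Finset ι) (F : ι → (Z ⟶ W))
    (h : ∀ i ∈ s, IsRad (F i)) : IsRad (∑ i ∈ s, F i) :=
  Finset.sum_induction F IsRad (fun _ _ ha hb => ha.add hb) IsRad.zero h

lemma isIso_of_comp_eq_id {Z W : C} (hZ : IsLocalRing (End Z)) (hW : IsLocalRing (End W))
    (α : Z ⟶ W) (r : W ⟶ Z) (hr : α ≫ r = 𝟙 Z) : IsIso α := by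
  haveI := hZ; haveI := hW
  have hara : α ≫ r ≫ α = α := by rw [← Category.assoc, hr, Category.id_comp]
  set e : End W := (r ≫ α : W ⟶ W) with he
  have hee : e * e = e := by
    show (r ≫ α) ≫ (r ≫ α) = r ≫ α
    rw [Category.assoc, hara]
  rcases locRing_dichotomy e with hu | hu
  · have h1 : e = 1 := hu.mul_left_cancel (by rw [hee, mul_one])
    exact ⟨⟨r, hr, h1⟩⟩
  · exfalso
    have h0 : e = 0 := by
      refine hu.mul_left_cancel ?_
      rw [mul_zero, sub_mul, one_mul, hee, sub_self]
    have hz : (𝟙 Z : End Z) = 0 := by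
      calc (𝟙 Z : Z ⟶ Z) = α ≫ r := hr.symm
        _ = (α ≫ r) ≫ (α ≫ r) := by rw [hr, Category.id_comp]
        _ = α ≫ (r ≫ α) ≫ r := by simp [Category.assoc]
        _ = 0 := by rw [show (r ≫ α : W ⟶ W) = (0 : W ⟶ W) from h0]; simp
    exact one_ne_zero (α := End Z) hz

lemma isRad_of_not_isIso {Z W : C} (hZ : IsLocalRing (End Z)) (hW : IsLocalRing (End W))
    {α : Z ⟶ W} (h : ¬ IsIso α) : IsRad α := by
  haveI := hZ
  intro g
  have hn : ¬ IsIso (α ≫ g) := by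
    intro hi
    exact h (isIso_of_comp_eq_id hZ hW α (g ≫ inv (α ≫ g))
      (by rw [← Category.assoc]; exact IsIso.hom_inv_id _))
  set a : End Z := (α ≫ g : Z ⟶ Z) with ha
  have hu : IsUnit (1 - a) := by
    rcases locRing_dichotomy a with hu | hu
    · exact absurd ((isUnit_iff_isIso _).1 hu) hn
    · exact hu
  exact (isUnit_iff_isIso _).1 hu

lemma isRad_of_entries {m : ℕ} (Y : Fin m → C) [HasBiproduct Y]
    (ψ : ⨁ Y ⟶ ⨁ Y)
    (h : ∀ i j, IsRad (biproduct.ι Y i ≫ ψ ≫ biproduct.π Y j)) : IsRad ψ := by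
  have hdec : ψ = ∑ i : Fin m, ∑ j : Fin m,
      biproduct.π Y i ≫ (biproduct.ι Y i ≫ ψ ≫ biproduct.π Y j) ≫ biproduct.ι Y j := by
    calc ψ = 𝟙 _ ≫ ψ ≫ 𝟙 _ := by simp
      _ = (∑ i : Fin m, biproduct.π Y i ≫ biproduct.ι Y i) ≫ ψ ≫
          (∑ j : Fin m, biproduct.π Y j ≫ biproduct.ι Y j) := by rw [biproduct.total]
      _ = _ := by
        simp only [Preadditive.sum_comp, Preadditive.comp_sum, Category.assoc]
        rw [Finset.sum_comm]
  rw [hdec]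
  refine IsRad.sum _ _ (fun i _ => IsRad.sum _ _ (fun j _ => ?_))
  have := ((h i j).comp_left (biproduct.π Y i)).comp_right (biproduct.ι Y j)
  simpa [Category.assoc] using this





lemma pivot_step [HasFiniteBiproducts C]
    {m' : ℕ} (Y : Fin (m' + 1) → C) {X : C}
    (f : ⨁ Y ⟶ X) (ψ : ⨁ Y ⟶ ⨁ Y) (hψ : ψ ≫ f = 0) (i j : Fin (m' + 1))
    (hθ : IsIso (biproduct.ι Y i ≫ ψ ≫ biproduct.π Y j)) :
    ∃ (r : ⨁ (Y ∘ j.succAbove) ⟶ ⨁ Y) (π' : ⨁ Y ⟶ ⨁ (Y ∘ j.succAbove))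
      (q : ⨁ Y ⟶ ⨁ (Y ∘ j.succAbove)),
      r ≫ π' = 𝟙 _ ∧ q ≫ (r ≫ f) = f := by
  classical
  set θ := biproduct.ι Y i ≫ ψ ≫ biproduct.π Y j with hθdef
  set σ := j.succAbove with hσ
  let r : ⨁ (Y ∘ σ) ⟶ ⨁ Y := biproduct.desc (fun l => biproduct.ι Y (σ l))
  let π' : ⨁ Y ⟶ ⨁ (Y ∘ σ) := biproduct.lift (fun l => biproduct.π Y (σ l))
  have hrπ : r ≫ π' = 𝟙 _ := by
    apply biproduct.hom_ext'
    intro l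
    apply biproduct.hom_ext
    intro l'
    simp only [r, π', Category.assoc, biproduct.ι_desc_assoc, biproduct.lift_π,
      Category.comp_id, biproduct.ι_π]
    by_cases hl : l = l'
    · subst hl
      simp
    · rw [dif_neg (fun hc => hl (Fin.succAbove_right_injective hc)), dif_neg hl]
  have hsum : ∑ k : Fin (m' + 1),
      (biproduct.ι Y i ≫ ψ ≫ biproduct.π Y k) ≫ (biproduct.ι Y k ≫ f) = 0 := by
    have h0 : biproduct.ι Y i ≫ ψ ≫ f = 0 := by
      rw [← Category.assoc, Category.assoc, hψ, comp_zero]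
    calc ∑ k : Fin (m' + 1),
        (biproduct.ι Y i ≫ ψ ≫ biproduct.π Y k) ≫ (biproduct.ι Y k ≫ f)
        = biproduct.ι Y i ≫ ψ ≫ (∑ k : Fin (m' + 1),
            biproduct.π Y k ≫ biproduct.ι Y k) ≫ f := by
          simp only [Preadditive.comp_sum, Preadditive.sum_comp, Category.assoc]
      _ = 0 := by rw [biproduct.total, Category.id_comp, h0]
  have hsplit : θ ≫ (biproduct.ι Y j ≫ f) + ∑ l : Fin m',
      (biproduct.ι Y i ≫ ψ ≫ biproduct.π Y (σ l)) ≫ (biproduct.ι Y (σ l) ≫ f) = 0 :=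
    (Fin.sum_univ_succAbove
      (fun k => (biproduct.ι Y i ≫ ψ ≫ biproduct.π Y k) ≫ (biproduct.ι Y k ≫ f)) j).symm.trans
      hsum
  have hfj : biproduct.ι Y j ≫ f = -(inv θ ≫ ∑ l : Fin m',
      (biproduct.ι Y i ≫ ψ ≫ biproduct.π Y (σ l)) ≫ (biproduct.ι Y (σ l) ≫ f)) := by
    have h1 : θ ≫ (biproduct.ι Y j ≫ f) = -(∑ l : Fin m',
        (biproduct.ι Y i ≫ ψ ≫ biproduct.π Y (σ l)) ≫ (biproduct.ι Y (σ l) ≫ f)) :=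
      eq_neg_of_add_eq_zero_left hsplit
    calc biproduct.ι Y j ≫ f = inv θ ≫ θ ≫ (biproduct.ι Y j ≫ f) := by
          rw [IsIso.inv_hom_id_assoc]
      _ = -(inv θ ≫ ∑ l : Fin m',
          (biproduct.ι Y i ≫ ψ ≫ biproduct.π Y (σ l)) ≫ (biproduct.ι Y (σ l) ≫ f)) := by
          rw [h1, Preadditive.comp_neg]
  let L : Y i ⟶ ⨁ (Y ∘ σ) :=
    biproduct.lift (fun l => biproduct.ι Y i ≫ ψ ≫ biproduct.π Y (σ l))
  refine ⟨r, π', π' - biproduct.π Y j ≫ inv θ ≫ L, hrπ, ?_⟩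
  have hπr : π' ≫ (r ≫ f) = ∑ l : Fin m',
      biproduct.π Y (σ l) ≫ (biproduct.ι Y (σ l) ≫ f) := by
    rw [← Category.assoc]
    show (biproduct.lift _ ≫ biproduct.desc _) ≫ f = _
    rw [biproduct.lift_desc]
    simp only [Preadditive.sum_comp, Category.assoc]
  have hLrf : L ≫ (r ≫ f) = ∑ l : Fin m',
      (biproduct.ι Y i ≫ ψ ≫ biproduct.π Y (σ l)) ≫ (biproduct.ι Y (σ l) ≫ f) := by
    rw [← Category.assoc]
    show (biproduct.lift _ ≫ biproduct.desc _) ≫ f = _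
    rw [biproduct.lift_desc]
    simp only [Preadditive.sum_comp, Category.assoc]
  have hfdec : f = biproduct.π Y j ≫ (biproduct.ι Y j ≫ f) +
      ∑ l : Fin m', biproduct.π Y (σ l) ≫ (biproduct.ι Y (σ l) ≫ f) := by
    conv_lhs => rw [← Category.id_comp f, ← biproduct.total]
    rw [Preadditive.sum_comp]
    simp only [Category.assoc]
    exact Fin.sum_univ_succAbove (fun k => biproduct.π Y k ≫ (biproduct.ι Y k ≫ f)) j
  rw [Preadditive.sub_comp, hπr]
  conv_rhs => rw [hfdec, hfj]
  simp only [Category.assoc]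
  rw [hLrf, Preadditive.comp_neg]
  simp only [Category.assoc]
  abel



/-- in a Krull–Schmidt triangulated category, a contravariantly finite thick
subcategory `U` gives rise to a stable t-structure `(U, U^⊥)`. -/
theorem stmt4 [HasFiniteBiproducts C] (hKS : IsKrullSchmidt C)
    (U : Set C) (hU : IsThickSub C U) (hcf : ContravariantlyFinite U) :
    IsStableTStructure C U (rightPerp U) := by
  classical
  refine ⟨fun n X hX => hU.shift_mem n X hX, ?_, fun X Y hX hY f => hY X hX f, ?_⟩
  · -- `U^⊥` is stable under shifts
    intro n T hT X hX f
    have hX' : (shiftFunctor C (-n)).obj X ∈ U := hU.shift_mem (-n) X hX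
    have hg : (shiftFunctor C (-n)).map f ≫
        (shiftFunctorCompIsoId C n (-n) (by omega)).hom.app T = 0 :=
      hT _ hX' _
    have h0 : (shiftFunctor C (-n)).map f = 0 := by
      have := congrArg
        (fun t => t ≫ (shiftFunctorCompIsoId C n (-n) (by omega)).inv.app T) hg
      simpa using this
    apply (shiftFunctor C (-n)).map_injective
    rw [h0, Functor.map_zero]
  · -- existence of the triangle
    intro X
    have hP : ∃ m : ℕ, ∃ Y : Fin m → C, ∃ f : ⨁ Y ⟶ X,
        (∀ k, IsLocalRing (End (Y k))) ∧ IsRightApproximation U f := by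
      obtain ⟨A, f, hf⟩ := hcf X
      obtain ⟨m, Y, hloc, ⟨e⟩⟩ := hKS A
      refine ⟨m, Y, e.inv ≫ f, hloc, ⟨hU.iso_mem e hf.1, ?_⟩⟩
      intro B hB g
      obtain ⟨t, ht⟩ := hf.2 B hB g
      exact ⟨t ≫ e.hom, by rw [Category.assoc, Iso.hom_inv_id_assoc, ht]⟩
    obtain ⟨m, hPm, hmin⟩ : ∃ m, (∃ Y : Fin m → C, ∃ f : ⨁ Y ⟶ X,
        (∀ k, IsLocalRing (End (Y k))) ∧ IsRightApproximation U f) ∧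
        ∀ k, k < m → ¬ (∃ Y : Fin k → C, ∃ f : ⨁ Y ⟶ X,
          (∀ k', IsLocalRing (End (Y k'))) ∧ IsRightApproximation U f) :=
      ⟨Nat.find hP, Nat.find_spec hP, fun k hk => Nat.find_min hP hk⟩
    obtain ⟨Y, f, hloc, hf⟩ := hPm
    obtain ⟨B, g', h, hT⟩ := distinguished_cocone_triangle f
    refine ⟨⨁ Y, B, hf.1, ?_, f, g', h, hT⟩
    intro W hW w
    -- Wakamatsu's argument
    obtain ⟨E, i, p, hT'⟩ := distinguished_cocone_triangle₂ (w ≫ h)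
    have hE : E ∈ U := hU.ext_mem _ hT' hf.1 hW
    have hb1 : (w ≫ h) ≫ (shiftFunctor C (1 : ℤ)).map f = 0 := by
      have h31 := comp_distTriang_mor_zero₃₁ _ hT
      change h ≫ (shiftFunctor C (1 : ℤ)).map f = 0 at h31
      rw [Category.assoc, h31, comp_zero]
    obtain ⟨t₁, ht₁⟩ := Triangle.yoneda_exact₃ _ (rot_of_distTriang _ hT')
      ((shiftFunctor C (1 : ℤ)).map f) (by exact hb1)
    obtain ⟨t₂, ht₂⟩ := (shiftFunctor C (1 : ℤ)).map_surjective t₁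
    have hit : i ≫ (-t₂) = f := by
      apply (shiftFunctor C (1 : ℤ)).map_injective
      change (shiftFunctor C (1 : ℤ)).map f = (-((shiftFunctor C (1 : ℤ)).map i)) ≫ t₁ at ht₁
      erw [Functor.map_comp, Functor.map_neg, ht₂, ht₁]
      exact (Preadditive.comp_neg _ _).trans (Preadditive.neg_comp _ _).symm
    obtain ⟨s, hs⟩ := hf.2 E hE (-t₂)
    have hφf : (i ≫ s) ≫ f = f := by rw [Category.assoc, hs, hit]
    have hψf : (𝟙 (⨁ Y) - i ≫ s) ≫ f = 0 := by
      rw [Preadditive.sub_comp, Category.id_comp, hφf, sub_self]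
    have hent : ∀ a b : Fin m,
        ¬ IsIso (biproduct.ι Y a ≫ (𝟙 (⨁ Y) - i ≫ s) ≫ biproduct.π Y b) := by
      intro a b hiso
      have hm : 0 < m := a.pos
      obtain ⟨m', rfl⟩ : ∃ m', m = m' + 1 := ⟨m - 1, by omega⟩
      obtain ⟨r, π', q, hrq, hq⟩ := pivot_step Y f _ hψf a b hiso
      refine hmin m' (by omega) ⟨Y ∘ b.succAbove, r ≫ f, fun l => hloc _,
        hU.summand_mem _ _ r π' hrq hf.1, ?_⟩
      intro B' hB' g
      obtain ⟨t, ht⟩ := hf.2 B' hB' g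
      exact ⟨t ≫ q, by rw [Category.assoc, hq, ht]⟩
    have hrad : IsRad (𝟙 (⨁ Y) - i ≫ s) :=
      isRad_of_entries Y _ (fun a b => isRad_of_not_isIso (hloc a) (hloc b) (hent a b))
    have hφ : IsIso (i ≫ s) := by
      have := hrad (𝟙 _)
      simpa [sub_sub_cancel] using this
    have hb0 : w ≫ h = 0 := by
      have h31 := comp_distTriang_mor_zero₃₁ _ hT'
      change (w ≫ h) ≫ (shiftFunctor C (1 : ℤ)).map i = 0 at h31
      have hcomp : (w ≫ h) ≫ (shiftFunctor C (1 : ℤ)).map (i ≫ s) = 0 := by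
        rw [Functor.map_comp, ← Category.assoc, h31, zero_comp]
      exact (cancel_mono ((shiftFunctor C (1 : ℤ)).map (i ≫ s))).1
        (by rw [hcomp, zero_comp])
    obtain ⟨e', he'⟩ := Triangle.coyoneda_exact₃ _ hT w (by exact hb0)
    obtain ⟨d, hd⟩ := hf.2 W hW e'
    have h12 := comp_distTriang_mor_zero₁₂ _ hT
    change f ≫ g' = 0 at h12
    have hw : w = (d ≫ f) ≫ g' := by rw [hd]; exact he'
    rw [hw, Category.assoc, h12, comp_zero]

end PaperIKM
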